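/- Let l, r ≥ 0 be integers with r + 1 ≤ l ≤ r + 2, let q ≥ 1 be an integer, and let λ₀, λ_∞ be as in the context. For R > 0 define λ_R(s) = λ₀(s) + R·λ_∞(s). Then for every R > 0 and every θ with 0 < θ < 2π, Re λ_R(e^{iθ}) < 0; moreover λ_R(1) = 0. (Hence the circulant coefficient matrix of the semi-discretized advection-diffusion equation, whose eigenvalues are λ_R(e^{2πik/N}) for k = 1, …, N, is semistable.) -/

import Mathlib

/-- Optimal finite-difference coefficients for the first derivative on the
stencil `{-l, …, r}`. -/
noncomputable def aCoef (l r : ℕ) (k : ℤ) : ℝ :=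
  if k = 0 then
    -∑ ν ∈ (Finset.Icc (-(l : ℤ)) (r : ℤ)).erase 0, (1 : ℝ) / (ν : ℝ)
  else
    -((-1 : ℝ) ^ k / (k : ℝ)) *
      ((Nat.factorial l * Nat.factorial r : ℕ) : ℝ) /
      ((Nat.factorial ((l : ℤ) + k).toNat * Nat.factorial ((r : ℤ) - k).toNat : ℕ) : ℝ)

/-- The symbol `λ₀(s) = -Σ_{k=-l}^{r} a_k s^k` of the advection discretization. -/
noncomputable def lam0 (l r : ℕ) (s : ℂ) : ℂ :=
  -∑ k ∈ Finset.Icc (-(l : ℤ)) (r : ℤ), (aCoef l r k : ℂ) * s ^ k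

/-- Optimal centered finite-difference coefficients for the second derivative on
the stencil `{-q, …, q}`. -/
noncomputable def bCoef (q : ℕ) (k : ℤ) : ℝ :=
  if k = 0 then
    -∑ j ∈ Finset.Icc 1 q, 2 / (j : ℝ) ^ 2
  else
    -(2 * (-1 : ℝ) ^ k / (k : ℝ) ^ 2) *
      ((Nat.factorial q * Nat.factorial q : ℕ) : ℝ) /
      ((Nat.factorial ((q : ℤ) + k).toNat * Nat.factorial ((q : ℤ) - k).toNat : ℕ) : ℝ)

/-- The symbol `λ_∞(s) = Σ_{k=-q}^{q} b_k s^k` of the diffusion discretization. -/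
noncomputable def lamInf (q : ℕ) (s : ℂ) : ℂ :=
  ∑ k ∈ Finset.Icc (-(q : ℤ)) (q : ℤ), (bCoef q k : ℂ) * s ^ k



lemma negpow_par {a b : ℕ} (h : a % 2 = b % 2) : ((-1:ℝ))^a = (-1)^b := by
  rcases Nat.even_or_odd a with ha | ha
  · rw [Nat.even_iff] at ha
    rw [(Nat.even_iff.2 ha).neg_one_pow, (Nat.even_iff.2 (by omega)).neg_one_pow]
  · rw [Nat.odd_iff] at ha
    rw [(Nat.odd_iff.2 ha).neg_one_pow, (Nat.odd_iff.2 (by omega)).neg_one_pow]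

lemma fact_ne (n : ℕ) : ((n.factorial : ℝ)) ≠ 0 := by
  exact_mod_cast n.factorial_ne_zero

lemma choose_cast_eq (j n : ℕ) (h : n ≤ j) :
    (((2*j).choose (j+n) : ℕ) : ℝ)
      = ((2*j).factorial : ℝ) / (((j+n).factorial : ℝ) * ((j-n).factorial : ℝ)) := by
  have h1 : j + n ≤ 2*j := by omega
  have h0 := Nat.choose_mul_factorial_mul_factorial h1
  have h2 : 2*j - (j+n) = j - n := by omega
  rw [h2] at h0
  rw [eq_div_iff (mul_ne_zero (fact_ne _) (fact_ne _)), ← mul_assoc]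
  exact_mod_cast h0

lemma sumId (n d : ℕ) (hn : 1 ≤ n) :
    ∑ j ∈ Finset.Icc n (n+d),
        ((j.factorial:ℝ))^2 / ((j:ℝ)^2 * ((j+n).factorial : ℝ) * (((j-n).factorial : ℕ) : ℝ))
      = (((n+d).factorial:ℝ))^2 / ((n:ℝ)^2 * ((2*n+d).factorial : ℝ) * ((d.factorial : ℕ) : ℝ)) := by
  induction d with
  | zero =>
    rw [Nat.add_zero, Finset.Icc_self, Finset.sum_singleton]
    have h1 : n - n = 0 := by omega
    have h2 : n + n = 2 * n := by omega
    rw [h1, h2]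
    norm_num
  | succ d ih =>
    rw [show 2*n + (d+1) = (2*n+d)+1 by ring, show n + (d+1) = (n+d)+1 by ring,
      Finset.sum_Icc_succ_top (by omega), ih]
    have e0 : (n+d) + 1 - n = d + 1 := by omega
    have e1 : (n+d) + 1 + n = (2*n+d) + 1 := by omega
    rw [e0, e1]
    have f1 : (((n+d)+1).factorial : ℝ) = ((n:ℝ)+d+1) * ((n+d).factorial : ℝ) := by
      rw [Nat.factorial_succ]; push_cast; ring
    have f2 : (((2*n+d)+1).factorial : ℝ) = (2*(n:ℝ)+d+1) * ((2*n+d).factorial : ℝ) := by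
      rw [Nat.factorial_succ]; push_cast; ring
    have f3 : ((d+1).factorial : ℝ) = ((d:ℝ)+1) * (d.factorial : ℝ) := by
      rw [Nat.factorial_succ]; push_cast; ring
    rw [f1, f2, f3]
    have hn' : (0:ℝ) < n := by exact_mod_cast hn
    have g1 := fact_ne (n+d)
    have g2 := fact_ne (2*n+d)
    have g3 := fact_ne d
    have g4 : ((n:ℝ)+d+1) ≠ 0 := by positivity
    have g5 : (2*(n:ℝ)+d+1) ≠ 0 := by positivity
    have g6 : ((d:ℝ)+1) ≠ 0 := by positivity
    have g7 : (n:ℝ) ≠ 0 := ne_of_gt hn'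
    push_cast
    field_simp
    ring

noncomputable def ucoef (j : ℕ) (k : ℤ) : ℝ :=
  (-1)^(((j:ℤ)+k).toNat + j) * ((2*j).choose (((j:ℤ)+k).toNat))

noncomputable def cCoef (j : ℕ) : ℝ :=
  2 * ((j.factorial : ℝ))^2 / ((j:ℝ)^2 * ((2*j).factorial : ℝ))

lemma neg_one_zpow_neg' (k : ℤ) : ((-1:ℝ))^(-k) = (-1:ℝ)^k := by
  rw [zpow_neg]
  rcases Int.even_or_odd k with h | h
  · rw [h.neg_one_zpow]; norm_num
  · rw [h.neg_one_zpow]; norm_num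

lemma bCoef_neg (q : ℕ) (k : ℤ) : bCoef q (-k) = bCoef q k := by
  rcases eq_or_ne k 0 with rfl | h
  · norm_num
  · unfold bCoef
    rw [if_neg (neg_ne_zero.2 h), if_neg h, neg_one_zpow_neg',
      show (q:ℤ) + -k = (q:ℤ) - k from (sub_eq_add_neg _ _).symm,
      show (q:ℤ) - -k = (q:ℤ) + k from sub_neg_eq_add _ _]
    push_cast
    ring

lemma ucoef_neg (j : ℕ) (k : ℤ) (h1 : -(j:ℤ) ≤ k) (h2 : k ≤ (j:ℤ)) :
    ucoef j (-k) = ucoef j k := by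
  unfold ucoef
  have hm : ((j:ℤ)+k).toNat ≤ 2*j := by omega
  have ha : ((j:ℤ) + -k).toNat = 2*j - ((j:ℤ)+k).toNat := by omega
  rw [ha, Nat.choose_symm hm]
  congr 1
  exact negpow_par (by omega)

lemma ucoef_natval (j n : ℕ) (h : n ≤ j) :
    ucoef j (n:ℤ) = (-1:ℝ)^n * ((2*j).choose (j+n)) := by
  unfold ucoef
  have h1 : ((j:ℤ)+(n:ℤ)).toNat = j + n := by omega
  rw [h1]
  congr 1
  exact negpow_par (by omega)

lemma keyB (q : ℕ) (k : ℤ) (hk : k ∈ Finset.Icc (-(q:ℤ)) (q:ℤ)) :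
    bCoef q k
      = -∑ j ∈ Finset.Icc 1 q,
          (if -(j:ℤ) ≤ k ∧ k ≤ (j:ℤ) then cCoef j * ucoef j k else 0) := by
  simp only [Finset.mem_Icc] at hk
  suffices H : ∀ n : ℕ, n ≤ q → bCoef q (n:ℤ)
      = -∑ j ∈ Finset.Icc 1 q,
          (if -(j:ℤ) ≤ (n:ℤ) ∧ (n:ℤ) ≤ (j:ℤ) then cCoef j * ucoef j (n:ℤ) else 0) by
    rcases le_or_gt 0 k with h0 | h0
    · lift k to ℕ using h0 with n
      exact H n (by exact_mod_cast hk.2)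
    · obtain ⟨n, hn⟩ : ∃ n : ℕ, k = -(n:ℤ) := ⟨k.natAbs, by omega⟩
      subst hn
      have hnq : n ≤ q := by omega
      rw [show bCoef q (-(n:ℤ)) = bCoef q (n:ℤ) from bCoef_neg q (n:ℤ), H n hnq]
      refine neg_inj.2 (Finset.sum_congr rfl fun j hj => ?_)
      by_cases hg : -(j:ℤ) ≤ (n:ℤ) ∧ (n:ℤ) ≤ (j:ℤ)
      · rw [if_pos hg, if_pos ⟨by omega, by omega⟩, ucoef_neg j (n:ℤ) (by omega) (by omega)]
      · rw [if_neg hg, if_neg (by push_neg at hg ⊢; omega)]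
  intro n hnq
  rcases Nat.eq_zero_or_pos n with rfl | hn1
  · rw [bCoef, if_pos (show ((0:ℕ):ℤ) = 0 by norm_num)]
    push_cast
    refine neg_inj.2 (Finset.sum_congr rfl fun j hj => ?_).symm
    simp only [Finset.mem_Icc] at hj
    have hu : ucoef j 0 = (-1:ℝ)^0 * ((2*j).choose (j+0)) := by
      exact_mod_cast ucoef_natval j 0 (by omega)
    rw [if_pos ⟨by omega, by omega⟩, hu, choose_cast_eq j 0 (by omega)]
    unfold cCoef
    have g1 := fact_ne j
    have g2 := fact_ne (2*j)
    have g3 : ((j:ℝ)) ≠ 0 := by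
      have : (0:ℝ) < j := by exact_mod_cast hj.1
      exact ne_of_gt this
    simp only [Nat.add_zero, Nat.sub_zero, pow_zero, one_mul]
    field_simp
  · -- n ≥ 1
    obtain ⟨d, rfl⟩ : ∃ d, q = n + d := ⟨q - n, by omega⟩
    have hsub : Finset.Icc n (n+d) ⊆ Finset.Icc 1 (n+d) :=
      Finset.Icc_subset_Icc (by omega) le_rfl
    have hzero : ∀ j ∈ Finset.Icc 1 (n+d), j ∉ Finset.Icc n (n+d) →
        (if -(j:ℤ) ≤ (n:ℤ) ∧ (n:ℤ) ≤ (j:ℤ) then cCoef j * ucoef j (n:ℤ) else 0) = 0 := by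
      intro j hj hj'
      simp only [Finset.mem_Icc] at hj hj'
      rw [if_neg (by push_neg; intro _; omega)]
    rw [← Finset.sum_subset hsub hzero]
    have hcong : ∀ j ∈ Finset.Icc n (n+d),
        (if -(j:ℤ) ≤ (n:ℤ) ∧ (n:ℤ) ≤ (j:ℤ) then cCoef j * ucoef j (n:ℤ) else 0)
          = ((-1:ℝ)^n * 2) *
            ((j.factorial:ℝ))^2 / ((j:ℝ)^2 * ((j+n).factorial : ℝ) * (((j-n).factorial : ℕ) : ℝ)) := by
      intro j hj
      simp only [Finset.mem_Icc] at hj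
      rw [if_pos ⟨by omega, by omega⟩, ucoef_natval j n (by omega), choose_cast_eq j n (by omega)]
      unfold cCoef
      have g1 := fact_ne j
      have g2 := fact_ne (2*j)
      have g3 := fact_ne (j+n)
      have g4 := fact_ne (j-n)
      have g5 : ((j:ℝ)) ≠ 0 := by
        have : (0:ℝ) < j := by exact_mod_cast (by omega : 0 < j)
        exact ne_of_gt this
      field_simp
    rw [Finset.sum_congr rfl hcong]
    simp only [mul_div_assoc]
    rw [← Finset.mul_sum, sumId n d hn1]
    rw [bCoef, if_neg (by exact_mod_cast (by omega : (n:ℤ) ≠ 0))]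
    have e1 : ((n:ℤ)+(d:ℤ)+(n:ℤ)).toNat = 2*n+d := by omega
    have e2 : ((n:ℤ)+(d:ℤ)-(n:ℤ)).toNat = d := by omega
    push_cast
    rw [e1, e2, zpow_natCast]
    have g1 := fact_ne (n+d)
    have g2 := fact_ne (2*n+d)
    have g3 := fact_ne d
    have g5 : ((n:ℝ)) ≠ 0 := by
      have : (0:ℝ) < n := by exact_mod_cast hn1
      exact ne_of_gt this
    field_simp

lemma upow (j : ℕ) (s : ℂ) (hs : s ≠ 0) :
    ((1 - s) * (1 - s⁻¹)) ^ j
      = ∑ k ∈ Finset.Icc (-(j:ℤ)) (j:ℤ), (ucoef j k : ℂ) * s ^ k := by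
  have h1 : (1 - s) * (1 - s⁻¹) = (-1) * s⁻¹ * ((s - 1)^2) := by
    field_simp; ring
  rw [h1]
  have h2 : ((-1 : ℂ) * s⁻¹ * (s-1)^2) ^ j = (-1)^j * (s ^ (-(j:ℤ))) * ((s-1)^2)^j := by
    rw [mul_pow, mul_pow, zpow_neg, zpow_natCast, inv_pow]
  rw [h2, ← pow_mul, sub_pow, Finset.mul_sum]
  refine Finset.sum_nbij' (i := fun m => (m:ℤ) - j) (j := fun k => ((j:ℤ)+k).toNat) ?_ ?_ ?_ ?_ ?_
  · intro m hm
    simp only [Finset.mem_range] at hm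
    simp only [Finset.mem_Icc]
    omega
  · intro k hk
    simp only [Finset.mem_Icc] at hk
    simp only [Finset.mem_range]
    omega
  · intro m hm; simp only [Finset.mem_range] at hm; omega
  · intro k hk; simp only [Finset.mem_Icc] at hk; omega
  · intro m hm
    simp only [Finset.mem_range] at hm
    have hm' : ((j:ℤ) + ((m:ℤ) - j)).toNat = m := by omega
    rw [ucoef, hm']
    push_cast
    rw [one_pow, zpow_neg, zpow_natCast, zpow_sub₀ hs, zpow_natCast,
      pow_add (-1:ℂ) m (2*j), pow_mul]
    norm_num
    ring

lemma lemB (q : ℕ) (s : ℂ) (hs : s ≠ 0) :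
    lamInf q s = -∑ j ∈ Finset.Icc 1 q, ((cCoef j : ℝ) : ℂ) * ((1-s)*(1-s⁻¹))^j := by
  have hrw : ∀ j ∈ Finset.Icc 1 q, ((cCoef j : ℝ) : ℂ) * ((1-s)*(1-s⁻¹))^j
      = ∑ k ∈ Finset.Icc (-(q:ℤ)) (q:ℤ),
          ((if -(j:ℤ) ≤ k ∧ k ≤ (j:ℤ) then cCoef j * ucoef j k else 0 : ℝ) : ℂ) * s^k := by
    intro j hj
    simp only [Finset.mem_Icc] at hj
    rw [upow j s hs, Finset.mul_sum]
    have hsub : Finset.Icc (-(j:ℤ)) (j:ℤ) ⊆ Finset.Icc (-(q:ℤ)) (q:ℤ) :=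
      Finset.Icc_subset_Icc (by omega) (by exact_mod_cast hj.2)
    have hzero : ∀ k ∈ Finset.Icc (-(q:ℤ)) (q:ℤ), k ∉ Finset.Icc (-(j:ℤ)) (j:ℤ) →
        ((if -(j:ℤ) ≤ k ∧ k ≤ (j:ℤ) then cCoef j * ucoef j k else 0 : ℝ) : ℂ) * s^k = 0 := by
      intro k hk hk'
      simp only [Finset.mem_Icc] at hk hk'
      rw [if_neg (by push_neg at hk' ⊢; intro h; exact hk' h)]
      simp
    rw [← Finset.sum_subset hsub hzero]
    refine Finset.sum_congr rfl fun k hk => ?_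
    simp only [Finset.mem_Icc] at hk
    rw [if_pos ⟨hk.1, hk.2⟩]
    push_cast
    ring
  rw [show (∑ j ∈ Finset.Icc 1 q, ((cCoef j : ℝ) : ℂ) * ((1-s)*(1-s⁻¹))^j)
      = ∑ j ∈ Finset.Icc 1 q, ∑ k ∈ Finset.Icc (-(q:ℤ)) (q:ℤ),
          ((if -(j:ℤ) ≤ k ∧ k ≤ (j:ℤ) then cCoef j * ucoef j k else 0 : ℝ) : ℂ) * s^k
    from Finset.sum_congr rfl hrw, Finset.sum_comm]
  unfold lamInf
  rw [← Finset.sum_neg_distrib]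
  refine Finset.sum_congr rfl fun k hk => ?_
  rw [← Finset.sum_mul, ← neg_mul]
  congr 1
  rw [keyB q k hk]
  push_cast
  ring

noncomputable def betaA (l r : ℕ) : ℝ :=
  (l.factorial : ℝ) * (r.factorial : ℝ) / ((l:ℝ) * ((l+r).factorial : ℝ))

lemma aCoef_pos (l r n : ℕ) (hn : 1 ≤ n) :
    aCoef l r (n:ℤ)
      = -((-1:ℝ)^n / (n:ℝ)) * ((l.factorial:ℝ) * (r.factorial:ℝ))
          / (((l+n).factorial:ℝ) * ((((r:ℤ)-(n:ℤ)).toNat.factorial):ℝ)) := by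
  unfold aCoef
  rw [if_neg (by exact_mod_cast (by omega : (n:ℤ) ≠ 0))]
  have h1 : ((l:ℤ)+(n:ℤ)).toNat = l + n := by omega
  rw [h1, zpow_natCast]
  push_cast
  ring

lemma aCoef_negval (l r n : ℕ) (hn : 1 ≤ n) (hnl : n ≤ l) :
    aCoef l r (-(n:ℤ))
      = ((-1:ℝ)^n / (n:ℝ)) * ((l.factorial:ℝ) * (r.factorial:ℝ))
          / (((l-n).factorial:ℝ) * (((r+n).factorial):ℝ)) := by
  unfold aCoef
  rw [if_neg (by omega : ¬ -(n:ℤ) = 0)]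
  have h1 : ((l:ℤ)+(-(n:ℤ))).toNat = l - n := by omega
  have h2 : ((r:ℤ)-(-(n:ℤ))).toNat = r + n := by omega
  rw [h1, h2, neg_one_zpow_neg', zpow_natCast]
  push_cast
  field_simp

lemma a0_eval (l r : ℕ) (hr : r ≤ l) :
    aCoef l r 0 = ∑ ν ∈ Finset.Ioc (r:ℤ) (l:ℤ), (1:ℝ)/(ν:ℝ) := by
  unfold aCoef
  rw [if_pos rfl]
  rw [Finset.sum_erase _ (by norm_num)]
  have hsplit : Finset.Icc (-(l:ℤ)) (r:ℤ) ∪ Finset.Ioc (r:ℤ) (l:ℤ) = Finset.Icc (-(l:ℤ)) (l:ℤ) := by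
    ext x
    simp only [Finset.mem_union, Finset.mem_Icc, Finset.mem_Ioc]
    omega
  have hdisj : Disjoint (Finset.Icc (-(l:ℤ)) (r:ℤ)) (Finset.Ioc (r:ℤ) (l:ℤ)) := by
    rw [Finset.disjoint_left]
    intro x hx hx'
    simp only [Finset.mem_Icc] at hx
    simp only [Finset.mem_Ioc] at hx'
    omega
  have hsum := Finset.sum_union (f := fun ν : ℤ => (1:ℝ)/(ν:ℝ)) hdisj
  rw [hsplit] at hsum
  have hzero : (∑ ν ∈ Finset.Icc (-(l:ℤ)) (l:ℤ), (1:ℝ)/(ν:ℝ)) = 0 := by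
    have hsym : (∑ ν ∈ Finset.Icc (-(l:ℤ)) (l:ℤ), (1:ℝ)/(ν:ℝ))
        = ∑ ν ∈ Finset.Icc (-(l:ℤ)) (l:ℤ), (1:ℝ)/((-ν : ℤ):ℝ) := by
      refine Finset.sum_nbij' (i := fun ν => -ν) (j := fun ν => -ν) ?_ ?_ ?_ ?_ ?_
      · intro a ha; simp only [Finset.mem_Icc] at *; omega
      · intro a ha; simp only [Finset.mem_Icc] at *; omega
      · intro a _; omega
      · intro a _; omega
      · intro a _; rw [neg_neg]
    have : (∑ ν ∈ Finset.Icc (-(l:ℤ)) (l:ℤ), (1:ℝ)/((-ν : ℤ):ℝ))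
        = -∑ ν ∈ Finset.Icc (-(l:ℤ)) (l:ℤ), (1:ℝ)/(ν:ℝ) := by
      rw [← Finset.sum_neg_distrib]
      refine Finset.sum_congr rfl fun ν _ => ?_
      push_cast
      rw [div_neg]
    rw [this] at hsym
    linarith
  rw [hzero] at hsum
  linarith [hsum]

lemma keyA (l r : ℕ) (hlr : l = r + 1 ∨ l = r + 2) (k : ℤ)
    (hk : k ∈ Finset.Icc (-(l:ℤ)) (l:ℤ)) :
    (if k ≤ (r:ℤ) then aCoef l r k else 0) + (if -(r:ℤ) ≤ k then aCoef l r (-k) else 0)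
      = betaA l r * ucoef l k := by
  simp only [Finset.mem_Icc] at hk
  suffices H : ∀ n : ℕ, n ≤ l →
      (if (n:ℤ) ≤ (r:ℤ) then aCoef l r (n:ℤ) else 0)
        + (if -(r:ℤ) ≤ (n:ℤ) then aCoef l r (-(n:ℤ)) else 0)
      = betaA l r * ucoef l (n:ℤ) by
    rcases le_or_gt 0 k with h0 | h0
    · lift k to ℕ using h0 with n
      exact H n (by exact_mod_cast hk.2)
    · obtain ⟨n, rfl⟩ : ∃ n : ℕ, k = -(n:ℤ) := ⟨k.natAbs, by omega⟩
      have hnl : n ≤ l := by omega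
      rw [ucoef_neg l (n:ℤ) (by omega) (by omega), ← H n hnl]
      simp only [neg_neg]
      rw [if_congr (show (-(n:ℤ) ≤ (r:ℤ)) ↔ (-(r:ℤ) ≤ (n:ℤ)) by omega) rfl rfl,
        if_congr (show (-(r:ℤ) ≤ -(n:ℤ)) ↔ ((n:ℤ) ≤ (r:ℤ)) by omega) rfl rfl]
      exact add_comm _ _
  intro n hnl
  have hu0 : ucoef l 0 = (-1:ℝ)^0 * ((2*l).choose (l+0)) := by
    exact_mod_cast ucoef_natval l 0 (by omega)
  rcases hlr with rfl | rfl
  · -- l = r + 1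
    by_cases hn0 : n = 0
    · subst hn0
      rw [if_pos (by omega), if_pos (by omega)]
      push_cast [neg_zero]
      rw [a0_eval _ _ (by omega), hu0, choose_cast_eq _ 0 (by omega)]
      have hIoc : Finset.Ioc (r:ℤ) ((r:ℕ)+1 : ℤ) = {(r:ℤ)+1} := by
        ext x; simp only [Finset.mem_Ioc, Finset.mem_singleton]; omega
      rw [show (((r+1:ℕ)):ℤ) = ((r:ℤ)+1) by push_cast; ring] at *
      rw [hIoc, Finset.sum_singleton]
      simp only [Nat.add_zero, Nat.sub_zero, pow_zero, one_mul]
      unfold betaA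
      rw [show 2*(r+1) = (2*r+1)+1 by ring, show (r+1)+r = 2*r+1 by ring,
        Nat.factorial_succ ((2*r+1)), Nat.factorial_succ r]
      have g1 := fact_ne r
      have g2 := fact_ne (2*r+1)
      have g3 : ((r:ℝ)+1) ≠ 0 := by positivity
      push_cast
      field_simp
      ring
    · by_cases hnr : n ≤ r
      · rw [if_pos (by omega), if_pos (by omega),
          aCoef_pos _ _ _ (by omega), aCoef_negval _ _ _ (by omega) (by omega),
          ucoef_natval _ _ (by omega), choose_cast_eq _ _ (by omega)]
        obtain ⟨m, rfl⟩ : ∃ m, r = n + m := ⟨r - n, by omega⟩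
        have e1 : (((n+m:ℕ):ℤ) - (n:ℤ)).toNat = m := by omega
        rw [e1]
        unfold betaA
        rw [show (n+m+1)+n = (2*n+m)+1 by ring, show (n+m)+n = 2*n+m by ring,
          show (n+m+1)-n = m+1 by omega, show (n+m+1)+(n+m) = 2*n+2*m+1 by ring,
          show 2*(n+m+1) = (2*n+2*m+1)+1 by ring,
          Nat.factorial_succ (2*n+m), Nat.factorial_succ m,
          Nat.factorial_succ (2*n+2*m+1), Nat.factorial_succ (n+m)]
        have g1 := fact_ne (n+m)
        have g2 := fact_ne (2*n+m)
        have g3 := fact_ne m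
        have g4 := fact_ne (2*n+2*m+1)
        have g5 : ((n:ℝ)) ≠ 0 := by exact_mod_cast (by omega : n ≠ 0)
        have g6 : ((n:ℝ)+m+1) ≠ 0 := by positivity
        have g7 : (2*(n:ℝ)+m+1) ≠ 0 := by positivity
        have g8 : ((m:ℝ)+1) ≠ 0 := by positivity
        have g9 : (2*(n:ℝ)+2*m+1+1) ≠ 0 := by positivity
        push_cast
        field_simp
        ring
      · have hn : n = r + 1 := by omega
        subst hn
        rw [if_neg (by omega), if_pos (by omega),
          aCoef_negval _ _ _ (by omega) (by omega), ucoef_natval _ _ (by omega)]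
        unfold betaA
        rw [show (r+1)+(r+1) = 2*(r+1) by ring, Nat.choose_self,
          show (r+1)-(r+1) = 0 by omega, show r+(r+1) = 2*r+1 by ring,
          show (r+1)+r = 2*r+1 by ring]
        have g1 := fact_ne r
        have g2 := fact_ne (r+1)
        have g3 := fact_ne (2*r+1)
        have g4 : ((r:ℝ)+1) ≠ 0 := by positivity
        push_cast
        rw [Nat.factorial_zero]
        field_simp
        ring
  · -- l = r + 2
    by_cases hn0 : n = 0
    · subst hn0
      rw [if_pos (by omega), if_pos (by omega)]
      push_cast [neg_zero]
      rw [a0_eval _ _ (by omega), hu0, choose_cast_eq _ 0 (by omega)]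
      have hIoc : Finset.Ioc (r:ℤ) ((r+2:ℕ) : ℤ) = {(r:ℤ)+1, (r:ℤ)+2} := by
        ext x
        simp only [Finset.mem_Ioc, Finset.mem_insert, Finset.mem_singleton]
        omega
      rw [hIoc]
      rw [Finset.sum_insert (by simp only [Finset.mem_singleton]; omega), Finset.sum_singleton]
      simp only [Nat.add_zero, Nat.sub_zero, pow_zero, one_mul]
      unfold betaA
      rw [show 2*(r+2) = ((2*r+2)+1)+1 by ring, show (r+2)+r = (2*r+1)+1 by ring,
        Nat.factorial_succ ((2*r+2)+1), Nat.factorial_succ (2*r+2),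
        show (2*r+2) = (2*r+1)+1 by ring, Nat.factorial_succ (2*r+1),
        show r+2 = (r+1)+1 by ring, Nat.factorial_succ (r+1), Nat.factorial_succ r]
      have g1 := fact_ne r
      have g2 := fact_ne (2*r+1)
      have g3 : ((r:ℝ)+1) ≠ 0 := by positivity
      have g4 : ((r:ℝ)+2) ≠ 0 := by positivity
      have g5 : (2*(r:ℝ)+2) ≠ 0 := by positivity
      have g6 : (2*(r:ℝ)+3) ≠ 0 := by positivity
      push_cast
      field_simp
      ring
    · by_cases hnr : n ≤ r
      · rw [if_pos (by omega), if_pos (by omega),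
          aCoef_pos _ _ _ (by omega), aCoef_negval _ _ _ (by omega) (by omega),
          ucoef_natval _ _ (by omega), choose_cast_eq _ _ (by omega)]
        obtain ⟨m, rfl⟩ : ∃ m, r = n + m := ⟨r - n, by omega⟩
        have e1 : (((n+m:ℕ):ℤ) - (n:ℤ)).toNat = m := by omega
        rw [e1]
        unfold betaA
        rw [show (n+m+2)+n = ((2*n+m)+1)+1 by ring, show (n+m)+n = 2*n+m by ring,
          show (n+m+2)-n = (m+1)+1 by omega, show (n+m+2)+(n+m) = 2*n+2*m+2 by ring,
          show 2*(n+m+2) = ((2*n+2*m+2)+1)+1 by ring,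
          Nat.factorial_succ ((2*n+m)+1), Nat.factorial_succ (2*n+m),
          Nat.factorial_succ ((m+1)), Nat.factorial_succ m,
          Nat.factorial_succ ((2*n+2*m+2)+1), Nat.factorial_succ (2*n+2*m+2),
          show n+m+2 = ((n+m)+1)+1 by ring,
          Nat.factorial_succ ((n+m)+1), Nat.factorial_succ (n+m)]
        have g1 := fact_ne (n+m)
        have g2 := fact_ne (2*n+m)
        have g3 := fact_ne m
        have g4 := fact_ne (2*n+2*m+2)
        have g5 : ((n:ℝ)) ≠ 0 := by exact_mod_cast (by omega : n ≠ 0)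
        have g6 : ((n:ℝ)+m+1) ≠ 0 := by positivity
        have g7 : ((n:ℝ)+m+2) ≠ 0 := by positivity
        have g8 : (2*(n:ℝ)+m+1) ≠ 0 := by positivity
        have g9 : (2*(n:ℝ)+m+2) ≠ 0 := by positivity
        have g10 : ((m:ℝ)+1) ≠ 0 := by positivity
        have g11 : ((m:ℝ)+2) ≠ 0 := by positivity
        have g12 : (2*(n:ℝ)+2*m+3) ≠ 0 := by positivity
        have g13 : (2*(n:ℝ)+2*m+4) ≠ 0 := by positivity
        push_cast
        field_simp
        ring
      · by_cases hnr1 : n = r + 1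
        · subst hnr1
          rw [if_neg (by omega), if_pos (by omega),
            aCoef_negval _ _ _ (by omega) (by omega), ucoef_natval _ _ (by omega)]
          unfold betaA
          rw [show 2*(r+2) = (2*r+3)+1 by ring, show (r+2)+(r+1) = 2*r+3 by ring,
            Nat.choose_succ_self_right,
            show (r+2)-(r+1) = 1 by omega, show r+(r+1) = 2*r+1 by ring,
            show (r+2)+r = (2*r+1)+1 by ring, Nat.factorial_succ (2*r+1)]
          have g1 := fact_ne r
          have g2 := fact_ne (r+2)
          have g3 := fact_ne (2*r+1)
          have g4 : ((r:ℝ)+1) ≠ 0 := by positivity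
          have g5 : ((r:ℝ)+2) ≠ 0 := by positivity
          have g6 : (2*(r:ℝ)+2) ≠ 0 := by positivity
          push_cast [Nat.factorial_one]
          field_simp
          ring
        · have hn : n = r + 2 := by omega
          subst hn
          rw [if_neg (by omega), if_pos (by omega),
            aCoef_negval _ _ _ (by omega) (by omega), ucoef_natval _ _ (by omega)]
          unfold betaA
          rw [show (r+2)+(r+2) = 2*(r+2) by ring, Nat.choose_self,
            show (r+2)-(r+2) = 0 by omega, show r+(r+2) = 2*r+2 by ring,
            show (r+2)+r = 2*r+2 by ring]
          have g1 := fact_ne r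
          have g2 := fact_ne (r+2)
          have g3 := fact_ne (2*r+2)
          have g4 : ((r:ℝ)+2) ≠ 0 := by positivity
          push_cast [Nat.factorial_zero]
          field_simp
          ring

lemma lemA (l r : ℕ) (hlr : l = r+1 ∨ l = r+2) (s : ℂ) (hs : s ≠ 0) :
    lam0 l r s + lam0 l r s⁻¹ = -((betaA l r : ℝ):ℂ) * ((1-s)*(1-s⁻¹))^l := by
  have hr_le : r ≤ l := by omega
  have hRHS : -((betaA l r : ℝ):ℂ) * ((1-s)*(1-s⁻¹))^l
      = ∑ k ∈ Finset.Icc (-(l:ℤ)) (l:ℤ), ((-(betaA l r * ucoef l k) : ℝ) : ℂ) * s^k := by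
    rw [upow l s hs, Finset.mul_sum]
    refine Finset.sum_congr rfl fun k hk => ?_
    push_cast
    ring
  rw [hRHS]
  unfold lam0
  have h2 : (∑ k ∈ Finset.Icc (-(l:ℤ)) (r:ℤ), (aCoef l r k:ℂ) * (s⁻¹)^k)
      = ∑ k ∈ Finset.Icc (-(r:ℤ)) (l:ℤ), (aCoef l r (-k):ℂ) * s^k := by
    refine Finset.sum_nbij' (i := fun k => -k) (j := fun k => -k) ?_ ?_ ?_ ?_ ?_
    · intro a ha; simp only [Finset.mem_Icc] at *; omega
    · intro a ha; simp only [Finset.mem_Icc] at *; omega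
    · intro a _; omega
    · intro a _; omega
    · intro a _
      rw [neg_neg, inv_zpow, ← zpow_neg]
  rw [h2]
  have ext1 : (∑ k ∈ Finset.Icc (-(l:ℤ)) (r:ℤ), (aCoef l r k : ℂ) * s^k)
      = ∑ k ∈ Finset.Icc (-(l:ℤ)) (l:ℤ),
          ((if k ≤ (r:ℤ) then aCoef l r k else 0 : ℝ):ℂ) * s^k := by
    have hsub : Finset.Icc (-(l:ℤ)) (r:ℤ) ⊆ Finset.Icc (-(l:ℤ)) (l:ℤ) :=
      Finset.Icc_subset_Icc le_rfl (by exact_mod_cast hr_le)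
    have hv : ∀ k ∈ Finset.Icc (-(l:ℤ)) (l:ℤ), k ∉ Finset.Icc (-(l:ℤ)) (r:ℤ) →
        ((if k ≤ (r:ℤ) then aCoef l r k else 0 : ℝ):ℂ) * s^k = 0 := by
      intro k hk hk'
      simp only [Finset.mem_Icc] at hk hk'
      rw [if_neg (by omega)]
      simp
    rw [← Finset.sum_subset hsub hv]
    refine Finset.sum_congr rfl fun k hk => ?_
    simp only [Finset.mem_Icc] at hk
    rw [if_pos hk.2]
  have ext2 : (∑ k ∈ Finset.Icc (-(r:ℤ)) (l:ℤ), (aCoef l r (-k) : ℂ) * s^k)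
      = ∑ k ∈ Finset.Icc (-(l:ℤ)) (l:ℤ),
          ((if -(r:ℤ) ≤ k then aCoef l r (-k) else 0 : ℝ):ℂ) * s^k := by
    have hsub : Finset.Icc (-(r:ℤ)) (l:ℤ) ⊆ Finset.Icc (-(l:ℤ)) (l:ℤ) :=
      Finset.Icc_subset_Icc (by omega) le_rfl
    have hv : ∀ k ∈ Finset.Icc (-(l:ℤ)) (l:ℤ), k ∉ Finset.Icc (-(r:ℤ)) (l:ℤ) →
        ((if -(r:ℤ) ≤ k then aCoef l r (-k) else 0 : ℝ):ℂ) * s^k = 0 := by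
      intro k hk hk'
      simp only [Finset.mem_Icc] at hk hk'
      rw [if_neg (by omega)]
      simp
    rw [← Finset.sum_subset hsub hv]
    refine Finset.sum_congr rfl fun k hk => ?_
    simp only [Finset.mem_Icc] at hk
    rw [if_pos hk.1]
  rw [ext1, ext2, ← neg_add, ← Finset.sum_add_distrib, ← Finset.sum_neg_distrib]
  refine Finset.sum_congr rfl fun k hk => ?_
  have hkey := keyA l r hlr k hk
  rw [← add_mul, ← neg_mul]
  congr 1
  rw [← Complex.ofReal_add, ← Complex.ofReal_neg, hkey]

lemma cCoef_pos (j : ℕ) (hj : 1 ≤ j) : 0 < cCoef j := by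
  unfold cCoef
  have h1 : (0:ℝ) < j := by exact_mod_cast hj
  have h2 : (0:ℝ) < (j.factorial : ℝ) := by exact_mod_cast j.factorial_pos
  have h3 : (0:ℝ) < ((2*j).factorial : ℝ) := by exact_mod_cast (2*j).factorial_pos
  positivity

lemma lam0_conj (l r : ℕ) (s : ℂ) :
    lam0 l r ((starRingEnd ℂ) s) = (starRingEnd ℂ) (lam0 l r s) := by
  unfold lam0
  rw [map_neg, map_sum]
  congr 1
  refine Finset.sum_congr rfl fun k _ => ?_
  rw [map_mul, map_zpow₀, Complex.conj_ofReal]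

/-- Stability of the semi-discretized advection-diffusion equation: for any
`R > 0`, the eigenvalue symbol `λ_R(s) = λ₀(s) + R·λ_∞(s)` has negative real
part on the unit circle away from `s = 1`, and vanishes at `s = 1`. -/
theorem semidiscrete_ADE_semistable (l r : ℕ) (h1 : r + 1 ≤ l) (h2 : l ≤ r + 2)
    (q : ℕ) (hq : 1 ≤ q) :
    ∀ R : ℝ, 0 < R →
      (∀ θ : ℝ, 0 < θ → θ < 2 * Real.pi →
        (lam0 l r (Complex.exp (θ * Complex.I)) +
          (R : ℂ) * lamInf q (Complex.exp (θ * Complex.I))).re < 0) ∧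
      lam0 l r 1 + (R : ℂ) * lamInf q 1 = 0 := by
  have hlr : l = r + 1 ∨ l = r + 2 := by omega
  intro R hR
  constructor
  · intro θ hθ1 hθ2
    set s := Complex.exp (θ * Complex.I) with hsdef
    have hs : s ≠ 0 := Complex.exp_ne_zero _
    have hconj : (starRingEnd ℂ) s = s⁻¹ := by
      rw [hsdef, ← Complex.exp_conj, ← Complex.exp_neg]
      congr 1
      rw [map_mul, Complex.conj_ofReal, Complex.conj_I]
      ring
    have hs1 : s ≠ 1 := by
      intro h
      rw [hsdef] at h
      obtain ⟨n, hn⟩ := Complex.exp_eq_one_iff.1 h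
      have hθeq : (θ:ℂ) = (n:ℂ) * (2*(Real.pi:ℂ)) := by
        apply mul_right_cancel₀ Complex.I_ne_zero
        rw [hn]; ring
      have hθr : θ = (n:ℝ) * (2*Real.pi) := by exact_mod_cast hθeq
      have hπ := Real.pi_pos
      have hn0 : (0:ℝ) < (n:ℝ) := by nlinarith
      have hn1 : (1:ℝ) ≤ (n:ℝ) := by
        have : (0:ℤ) < n := by exact_mod_cast hn0
        exact_mod_cast this
      nlinarith
    set t : ℝ := Complex.normSq (1 - s) with htdef
    have ht0 : 0 < t := by
      rw [htdef]
      exact Complex.normSq_pos.2 (sub_ne_zero.2 (Ne.symm hs1))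
    have hu : ((1:ℂ) - s) * (1 - s⁻¹) = ((t:ℝ):ℂ) := by
      calc ((1:ℂ)-s) * (1 - s⁻¹) = (1-s) * ((starRingEnd ℂ) (1-s)) := by
            rw [map_sub, map_one, hconj]
        _ = ((t:ℝ):ℂ) := by rw [Complex.mul_conj, htdef]
    have hA := lemA l r hlr s hs
    have hconj0 : lam0 l r s⁻¹ = (starRingEnd ℂ) (lam0 l r s) := by
      rw [← hconj, lam0_conj]
    rw [hconj0, hu, Complex.add_conj] at hA
    have hre0 : (lam0 l r s).re = -(betaA l r * t^l)/2 := by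
      have h2re : ((2*(lam0 l r s).re : ℝ):ℂ) = ((-(betaA l r * t^l) : ℝ):ℂ) := by
        rw [hA]
        push_cast
        ring
      have := Complex.ofReal_inj.1 h2re
      linarith
    have hB := lemB q s hs
    rw [hu] at hB
    have hBreal : lamInf q s = ((-(∑ j ∈ Finset.Icc 1 q, cCoef j * t^j) : ℝ) : ℂ) := by
      rw [hB]
      push_cast
      ring
    have hreInf : (lamInf q s).re = -(∑ j ∈ Finset.Icc 1 q, cCoef j * t^j) := by
      rw [hBreal, Complex.ofReal_re]
    have himInf : (lamInf q s).im = 0 := by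
      rw [hBreal, Complex.ofReal_im]
    have hsum_pos : 0 < ∑ j ∈ Finset.Icc 1 q, cCoef j * t^j := by
      have h1mem : (1:ℕ) ∈ Finset.Icc 1 q := by
        simp only [Finset.mem_Icc]
        exact ⟨le_rfl, hq⟩
      have hterm : ∀ j ∈ Finset.Icc 1 q, 0 ≤ cCoef j * t^j := by
        intro j hj
        simp only [Finset.mem_Icc] at hj
        exact mul_nonneg (cCoef_pos j hj.1).le (by positivity)
      have hle := Finset.single_le_sum hterm h1mem
      have hc1 : cCoef 1 * t^1 = t := by
        unfold cCoef
        norm_num [Nat.factorial]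
      rw [hc1] at hle
      linarith
    have hfinal : (lam0 l r s + (R:ℂ) * lamInf q s).re
        = (lam0 l r s).re + R * (lamInf q s).re := by
      simp [Complex.add_re, Complex.mul_re, Complex.ofReal_re, Complex.ofReal_im, himInf]
    rw [hfinal, hre0, hreInf]
    have hβ : 0 ≤ betaA l r := by
      unfold betaA
      positivity
    have hβt : 0 ≤ betaA l r * t^l := mul_nonneg hβ (by positivity)
    nlinarith [mul_pos hR hsum_pos]
  · have h1 : lam0 l r 1 = 0 := by
      have hA := lemA l r hlr 1 one_ne_zero
      rw [inv_one, show ((1:ℂ)-1)*(1-1) = 0 by ring,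
        zero_pow (by omega : l ≠ 0), mul_zero] at hA
      exact add_self_eq_zero.1 hA
    have h2 : lamInf q 1 = 0 := by
      have hB := lemB q 1 one_ne_zero
      rw [inv_one, show ((1:ℂ)-1)*(1-1) = 0 by ring] at hB
      rw [hB, neg_eq_zero]
      refine Finset.sum_eq_zero fun j hj => ?_
      simp only [Finset.mem_Icc] at hj
      rw [zero_pow (by omega : j ≠ 0), mul_zero]
    rw [h1, h2, mul_zero, add_zero]
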